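/- (Intermediate convexity bound (6.210) from the proof of Theorem 2.) Let a, T̃ > 0, α ∈ (0,1/2), d > 0 and Ω = (0,a) × (0,T̃). There exists B > 0 depending only on d such that for all λ ≥ 1, all γ > 0, and all functions q₁, q₂ : ℝ × ℝ → ℝ of class C⁴ on an open neighborhood of the closure of Ω with |∂_x^i ∂_t^j q_k(x,t)| ≤ d on the closure of Ω for all i + j ≤ 2 and k = 1, 2, setting h = q₂ − q₁ one has: K_{λ,γ}(q₂) − K_{λ,γ}(q₁) − A_{λ,γ}(q₁)(h) ≥ (1/2)·∫_Ω (h_xx − 2 h_xt)² ψ_λ dx dt − B·∫_Ω (h_x(x,0)² + h(x,t)²) ψ_λ(x,t) dx dt + γ·‖h‖²_{H⁴(Ω)}. -/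

import Mathlib

open MeasureTheory Set

/-- Partial derivative in the first variable. -/
noncomputable def partialX (f : ℝ × ℝ → ℝ) : ℝ × ℝ → ℝ :=
  fun p => deriv (fun x => f (x, p.2)) p.1

/-- Partial derivative in the second variable. -/
noncomputable def partialT (f : ℝ × ℝ → ℝ) : ℝ × ℝ → ℝ :=
  fun p => deriv (fun t => f (p.1, t)) p.2

/-- Higher partial derivative ∂_x^i ∂_t^j f. -/
noncomputable def pd (f : ℝ × ℝ → ℝ) : ℕ → ℕ → ℝ × ℝ → ℝ
  | 0, 0 => f
  | 0, j + 1 => partialT (pd f 0 j)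
  | i + 1, j => partialX (pd f i j)

/-- The rectangle Ω = (0,a) × (0,T̃). -/
def Rect (a T : ℝ) : Set (ℝ × ℝ) := Ioo (0 : ℝ) a ×ˢ Ioo (0 : ℝ) T

/-- The triangle R_{a,α,μ} = {(x,t) : x > 0, t > 0, x + αt < 2αa − μ}. -/
def Tri (a α μ : ℝ) : Set (ℝ × ℝ) :=
  {p : ℝ × ℝ | 0 < p.1 ∧ 0 < p.2 ∧ p.1 + α * p.2 < 2 * α * a - μ}

/-- The Carleman weight ψ_λ(x,t) = exp(−2λ(x + αt)). -/
noncomputable def carlemanWeight (α lam : ℝ) : ℝ × ℝ → ℝ :=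
  fun p => Real.exp (-2 * lam * (p.1 + α * p.2))

/-- The squared Sobolev H^k(Ω) norm: Σ_{i+j≤k} ∫_Ω (∂_x^i ∂_t^j f)². -/
noncomputable def sobNormSq (k : ℕ) (Ω : Set (ℝ × ℝ)) (f : ℝ × ℝ → ℝ) : ℝ :=
  ∑ i ∈ Finset.range (k + 1), ∑ j ∈ Finset.range (k + 1 - i),
    ∫ p in Ω, (pd f i j p) ^ 2

/-- The Sobolev H^k(Ω) inner product. -/
noncomputable def sobInner (k : ℕ) (Ω : Set (ℝ × ℝ)) (f g : ℝ × ℝ → ℝ) : ℝ :=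
  ∑ i ∈ Finset.range (k + 1), ∑ j ∈ Finset.range (k + 1 - i),
    ∫ p in Ω, (pd f i j p) * (pd g i j p)

/-- The squared H¹ norm on a planar set. -/
noncomputable def h1NormSq (R : Set (ℝ × ℝ)) (h : ℝ × ℝ → ℝ) : ℝ :=
  ∫ p in R, ((h p) ^ 2 + (partialX h p) ^ 2 + (partialT h p) ^ 2)

/-- The squared H¹(0,ℓ) norm of a function of one variable. -/
noncomputable def h1NormSq1D (ℓ : ℝ) (g : ℝ → ℝ) : ℝ :=
  ∫ x in Ioo (0 : ℝ) ℓ, ((g x) ^ 2 + (deriv g x) ^ 2)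

/-- The quasilinear operator M(q) = q_xx − 2 q_xt + 4 q_x(x,0) q. -/
noncomputable def Mop (q : ℝ × ℝ → ℝ) : ℝ × ℝ → ℝ :=
  fun p => partialX (partialX q) p - 2 * partialT (partialX q) p
    + 4 * partialX q (p.1, 0) * q p

/-- The weighted Tikhonov functional K_{λ,γ}. -/
noncomputable def Kfunc (a T α lam γ : ℝ) (q : ℝ × ℝ → ℝ) : ℝ :=
  (∫ p in Rect a T, (Mop q p) ^ 2 * carlemanWeight α lam p)
    + γ * sobNormSq 4 (Rect a T) q

/-- The linearization A_{λ,γ}(q)(h) of K_{λ,γ} at q in direction h. -/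
noncomputable def Afunc (a T α lam γ : ℝ) (q h : ℝ × ℝ → ℝ) : ℝ :=
  (∫ p in Rect a T, 2 * Mop q p *
      (partialX (partialX h) p - 2 * partialT (partialX h) p
        + 4 * partialX h (p.1, 0) * q p + 4 * partialX q (p.1, 0) * h p)
      * carlemanWeight α lam p)
    + 2 * γ * sobInner 4 (Rect a T) q h

/-- f is C⁴ on an open neighborhood of the closed rectangle [0,a] × [0,T]. -/
def C4Near (a T : ℝ) (f : ℝ × ℝ → ℝ) : Prop :=
  ∃ U : Set (ℝ × ℝ), IsOpen U ∧ Icc (0 : ℝ) a ×ˢ Icc (0 : ℝ) T ⊆ U ∧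
    ContDiffOn ℝ 4 f U

/-- All partial derivatives of order ≤ 2 of f are bounded by d on [0,a] × [0,T]. -/
def DerivBound2 (a T d : ℝ) (f : ℝ × ℝ → ℝ) : Prop :=
  ∀ i j : ℕ, i + j ≤ 2 → ∀ p ∈ Icc (0 : ℝ) a ×ˢ Icc (0 : ℝ) T, |pd f i j p| ≤ d

lemma lineX_hasDerivAt (t x : ℝ) : HasDerivAt (fun x : ℝ => ((x, t) : ℝ × ℝ)) (1, 0) x :=
  (hasDerivAt_id x).prodMk (hasDerivAt_const x t)

lemma lineT_hasDerivAt (x t : ℝ) : HasDerivAt (fun t : ℝ => ((x, t) : ℝ × ℝ)) (0, 1) t :=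
  (hasDerivAt_const t x).prodMk (hasDerivAt_id t)

lemma hasDerivAt_sliceX {f : ℝ × ℝ → ℝ} {p : ℝ × ℝ} (hf : DifferentiableAt ℝ f p) :
    HasDerivAt (fun x => f (x, p.2)) (fderiv ℝ f p (1, 0)) p.1 := by
  have hl : HasDerivAt (fun x : ℝ => ((x, p.2) : ℝ × ℝ)) ((1:ℝ), (0:ℝ)) p.1 :=
    lineX_hasDerivAt p.2 p.1
  have hfp : HasFDerivAt f (fderiv ℝ f p) ((fun x : ℝ => ((x, p.2) : ℝ × ℝ)) p.1) := by
    simpa using hf.hasFDerivAt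
  exact hfp.comp_hasDerivAt p.1 hl

lemma hasDerivAt_sliceT {f : ℝ × ℝ → ℝ} {p : ℝ × ℝ} (hf : DifferentiableAt ℝ f p) :
    HasDerivAt (fun t => f (p.1, t)) (fderiv ℝ f p (0, 1)) p.2 := by
  have hl : HasDerivAt (fun t : ℝ => ((p.1, t) : ℝ × ℝ)) ((0:ℝ), (1:ℝ)) p.2 :=
    lineT_hasDerivAt p.1 p.2
  have hfp : HasFDerivAt f (fderiv ℝ f p) ((fun t : ℝ => ((p.1, t) : ℝ × ℝ)) p.2) := by
    simpa using hf.hasFDerivAt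
  exact hfp.comp_hasDerivAt p.2 hl

lemma partialX_eq_fderiv {f : ℝ × ℝ → ℝ} {p : ℝ × ℝ} (hf : DifferentiableAt ℝ f p) :
    partialX f p = fderiv ℝ f p (1, 0) := (hasDerivAt_sliceX hf).deriv

lemma partialT_eq_fderiv {f : ℝ × ℝ → ℝ} {p : ℝ × ℝ} (hf : DifferentiableAt ℝ f p) :
    partialT f p = fderiv ℝ f p (0, 1) := (hasDerivAt_sliceT hf).deriv

lemma sliceX_diffAt {f : ℝ × ℝ → ℝ} {p : ℝ × ℝ} (hf : DifferentiableAt ℝ f p) :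
    DifferentiableAt ℝ (fun x => f (x, p.2)) p.1 := (hasDerivAt_sliceX hf).differentiableAt

lemma sliceT_diffAt {f : ℝ × ℝ → ℝ} {p : ℝ × ℝ} (hf : DifferentiableAt ℝ f p) :
    DifferentiableAt ℝ (fun t => f (p.1, t)) p.2 := (hasDerivAt_sliceT hf).differentiableAt

lemma diffAt_of_contDiffOn {n : WithTop ℕ∞} {f : ℝ × ℝ → ℝ} {U : Set (ℝ × ℝ)} {p : ℝ × ℝ}
    (hUo : IsOpen U) (hf : ContDiffOn ℝ n f U) (hn : 1 ≤ n) (hp : p ∈ U) :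
    DifferentiableAt ℝ f p :=
  ((hf.differentiableOn (zero_lt_one.trans_le hn).ne') p hp).differentiableAt (hUo.mem_nhds hp)

lemma contDiffOn_partialX {n : ℕ} {f : ℝ × ℝ → ℝ} {U : Set (ℝ × ℝ)}
    (hUo : IsOpen U) (hf : ContDiffOn ℝ (n + 1 : ℕ) f U) :
    ContDiffOn ℝ (n : ℕ) (partialX f) U := by
  have h1 : ContDiffOn ℝ (n : ℕ) (fun p => fderiv ℝ f p) U :=
    hf.fderiv_of_isOpen hUo (by norm_cast)
  have h2 : ContDiffOn ℝ (n : ℕ) (fun p => fderiv ℝ f p ((1:ℝ), (0:ℝ))) U :=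
    h1.clm_apply contDiffOn_const
  exact h2.congr fun p hp =>
    partialX_eq_fderiv (diffAt_of_contDiffOn hUo hf (by norm_cast; omega) hp)

lemma contDiffOn_partialT {n : ℕ} {f : ℝ × ℝ → ℝ} {U : Set (ℝ × ℝ)}
    (hUo : IsOpen U) (hf : ContDiffOn ℝ (n + 1 : ℕ) f U) :
    ContDiffOn ℝ (n : ℕ) (partialT f) U := by
  have h1 : ContDiffOn ℝ (n : ℕ) (fun p => fderiv ℝ f p) U :=
    hf.fderiv_of_isOpen hUo (by norm_cast)
  have h2 : ContDiffOn ℝ (n : ℕ) (fun p => fderiv ℝ f p ((0:ℝ), (1:ℝ))) U :=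
    h1.clm_apply contDiffOn_const
  exact h2.congr fun p hp =>
    partialT_eq_fderiv (diffAt_of_contDiffOn hUo hf (by norm_cast; omega) hp)

lemma partialX_congr {f g : ℝ × ℝ → ℝ} {U : Set (ℝ × ℝ)} {p : ℝ × ℝ}
    (hUo : IsOpen U) (hfg : EqOn f g U) (hp : p ∈ U) : partialX f p = partialX g p := by
  unfold partialX
  apply Filter.EventuallyEq.deriv_eq
  have hc : Continuous (fun x : ℝ => ((x, p.2) : ℝ × ℝ)) := by fun_prop
  have : (fun x : ℝ => ((x, p.2) : ℝ × ℝ)) ⁻¹' U ∈ nhds p.1 :=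
    (hUo.preimage hc).mem_nhds (by simpa using hp)
  filter_upwards [this] with x hx using hfg hx

lemma partialT_congr {f g : ℝ × ℝ → ℝ} {U : Set (ℝ × ℝ)} {p : ℝ × ℝ}
    (hUo : IsOpen U) (hfg : EqOn f g U) (hp : p ∈ U) : partialT f p = partialT g p := by
  unfold partialT
  apply Filter.EventuallyEq.deriv_eq
  have hc : Continuous (fun t : ℝ => ((p.1, t) : ℝ × ℝ)) := by fun_prop
  have : (fun t : ℝ => ((p.1, t) : ℝ × ℝ)) ⁻¹' U ∈ nhds p.2 :=
    (hUo.preimage hc).mem_nhds (by simpa using hp)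
  filter_upwards [this] with t ht using hfg ht

lemma partialX_sub {f g : ℝ × ℝ → ℝ} {U : Set (ℝ × ℝ)} {p : ℝ × ℝ} {n m : WithTop ℕ∞}
    (hUo : IsOpen U) (hf : ContDiffOn ℝ n f U) (hg : ContDiffOn ℝ m g U)
    (hn : 1 ≤ n) (hm : 1 ≤ m) (hp : p ∈ U) :
    partialX (fun q => f q - g q) p = partialX f p - partialX g p := by
  unfold partialX
  exact deriv_sub (sliceX_diffAt (diffAt_of_contDiffOn hUo hf hn hp))
    (sliceX_diffAt (diffAt_of_contDiffOn hUo hg hm hp))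

lemma partialT_sub {f g : ℝ × ℝ → ℝ} {U : Set (ℝ × ℝ)} {p : ℝ × ℝ} {n m : WithTop ℕ∞}
    (hUo : IsOpen U) (hf : ContDiffOn ℝ n f U) (hg : ContDiffOn ℝ m g U)
    (hn : 1 ≤ n) (hm : 1 ≤ m) (hp : p ∈ U) :
    partialT (fun q => f q - g q) p = partialT f p - partialT g p := by
  unfold partialT
  exact deriv_sub (sliceT_diffAt (diffAt_of_contDiffOn hUo hf hn hp))
    (sliceT_diffAt (diffAt_of_contDiffOn hUo hg hm hp))

lemma pd_zz (f : ℝ × ℝ → ℝ) : pd f 0 0 = f := by rw [pd]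
lemma pd_sT (f : ℝ × ℝ → ℝ) (j : ℕ) : pd f 0 (j+1) = partialT (pd f 0 j) := by rw [pd]
lemma pd_sX (f : ℝ × ℝ → ℝ) (i j : ℕ) : pd f (i+1) j = partialX (pd f i j) := by rw [pd]

lemma pd_contDiffOn {n : ℕ} {f : ℝ × ℝ → ℝ} {U : Set (ℝ × ℝ)}
    (hUo : IsOpen U) (hf : ContDiffOn ℝ (n : ℕ) f U) :
    ∀ i j, i + j ≤ n → ContDiffOn ℝ ((n - (i + j) : ℕ)) (pd f i j) U := by
  intro i
  induction i with
  | zero =>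
    intro j
    induction j with
    | zero => intro _; rw [pd_zz]; simpa using hf
    | succ j ih =>
      intro hj
      have h1 := ih (by omega)
      have e : (n - (0 + j) : ℕ) = (n - (0 + (j + 1))) + 1 := by omega
      rw [e] at h1
      rw [pd_sT]; exact contDiffOn_partialT hUo h1
  | succ i ihi =>
    intro j hj
    have h1 := ihi j (by omega)
    have e : (n - (i + j) : ℕ) = (n - (i + 1 + j)) + 1 := by omega
    rw [e] at h1
    rw [pd_sX]; exact contDiffOn_partialX hUo h1

lemma pd_sub {n : ℕ} {f g : ℝ × ℝ → ℝ} {U : Set (ℝ × ℝ)}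
    (hUo : IsOpen U) (hf : ContDiffOn ℝ (n : ℕ) f U) (hg : ContDiffOn ℝ (n : ℕ) g U) :
    ∀ i j, i + j ≤ n →
      EqOn (pd (fun q => f q - g q) i j) (fun q => pd f i j q - pd g i j q) U := by
  intro i
  induction i with
  | zero =>
    intro j
    induction j with
    | zero => intro _ p _; simp [pd_zz]
    | succ j ih =>
      intro hj p hp
      have hIH := ih (by omega)
      have hcf := pd_contDiffOn hUo hf 0 j (by omega)
      have hcg := pd_contDiffOn hUo hg 0 j (by omega)
      have h1 : pd (fun q => f q - g q) 0 (j + 1) p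
          = partialT (fun q => pd f 0 j q - pd g 0 j q) p := by
        rw [pd_sT]; exact partialT_congr hUo hIH hp
      rw [h1, partialT_sub hUo hcf hcg (by norm_cast; omega) (by norm_cast; omega) hp]
      simp [pd_sT]
  | succ i ihi =>
    intro j hj p hp
    have hIH := ihi j (by omega)
    have hcf := pd_contDiffOn hUo hf i j (by omega)
    have hcg := pd_contDiffOn hUo hg i j (by omega)
    have h1 : pd (fun q => f q - g q) (i + 1) j p
        = partialX (fun q => pd f i j q - pd g i j q) p := by
      rw [pd_sX]; exact partialX_congr hUo hIH hp
    rw [h1, partialX_sub hUo hcf hcg (by norm_cast; omega) (by norm_cast; omega) hp]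
    simp [pd_sX]

lemma clairaut {n : ℕ} {f : ℝ × ℝ → ℝ} {U : Set (ℝ × ℝ)} {p : ℝ × ℝ}
    (hUo : IsOpen U) (hf : ContDiffOn ℝ (n : ℕ) f U) (hn : 2 ≤ n) (hp : p ∈ U) :
    partialT (partialX f) p = partialX (partialT f) p := by
  set g1 : ℝ × ℝ → (ℝ × ℝ) →L[ℝ] ℝ := fun q => fderiv ℝ f q with hg1def
  have hUnhds : U ∈ nhds p := hUo.mem_nhds hp
  have hg1smooth : ContDiffOn ℝ ((n - 1 : ℕ)) g1 U := by
    apply hf.fderiv_of_isOpen hUo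
    norm_cast; omega
  have hg1diff : DifferentiableAt ℝ g1 p :=
    ((hg1smooth.differentiableOn (by norm_cast; omega)) p hp).differentiableAt hUnhds
  set f'' := fderiv ℝ g1 p with hf''def
  -- symmetry of f''
  have hsymm : ∀ v w : ℝ × ℝ, f'' v w = f'' w v := by
    intro v w
    apply second_derivative_symmetric_of_eventually (f := f) (f' := g1) (x := p)
    · filter_upwards [hUnhds] with y hy
      exact (diffAt_of_contDiffOn hUo hf (by norm_cast; omega) hy).hasFDerivAt
    · exact hg1diff.hasFDerivAt
  -- derivative of directional slice of g1
  have hdir : ∀ v w : ℝ × ℝ, fderiv ℝ (fun q => g1 q v) p w = f'' w v := by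
    intro v w
    have hcomp := (ContinuousLinearMap.apply ℝ ℝ v).hasFDerivAt.comp p hg1diff.hasFDerivAt
    have hcomp' : HasFDerivAt (fun q => g1 q v)
        (((ContinuousLinearMap.apply ℝ ℝ v).comp (fderiv ℝ g1 p))) p := hcomp
    rw [hcomp'.fderiv]
    rfl
  have hXdiff : ∀ v : ℝ × ℝ, DifferentiableAt ℝ (fun q => g1 q v) p := by
    intro v
    exact (ContinuousLinearMap.apply ℝ ℝ v).differentiableAt.comp p hg1diff
  -- partialX f agrees with directional fderiv near p
  have hXev : partialX f =ᶠ[nhds p] (fun q => g1 q ((1:ℝ), (0:ℝ))) := by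
    filter_upwards [hUnhds] with y hy
    exact partialX_eq_fderiv (diffAt_of_contDiffOn hUo hf (by norm_cast; omega) hy)
  have hTev : partialT f =ᶠ[nhds p] (fun q => g1 q ((0:ℝ), (1:ℝ))) := by
    filter_upwards [hUnhds] with y hy
    exact partialT_eq_fderiv (diffAt_of_contDiffOn hUo hf (by norm_cast; omega) hy)
  have h1 : partialT (partialX f) p = f'' (0, 1) (1, 0) := by
    rw [partialT_eq_fderiv ((hXdiff (1, 0)).congr_of_eventuallyEq hXev)]
    rw [hXev.fderiv_eq]
    exact hdir (1, 0) (0, 1)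
  have h2 : partialX (partialT f) p = f'' (1, 0) (0, 1) := by
    rw [partialX_eq_fderiv ((hXdiff (0, 1)).congr_of_eventuallyEq hTev)]
    rw [hTev.fderiv_eq]
    exact hdir (0, 1) (1, 0)
  rw [h1, h2, hsymm]


lemma key_ineq (d m A0 e2 x0 hv qx q1v : ℝ) (hd : 0 < d)
    (hm : |m| ≤ 3 * d + 4 * d ^ 2) (he2 : |e2| ≤ d) (hqx : |qx| ≤ d)
    (hq1v : e2 - q1v = hv) :
    (m + A0 + 4 * x0 * e2 + 4 * qx * hv) ^ 2 - m ^ 2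
      - 2 * m * (A0 + 4 * x0 * q1v + 4 * qx * hv)
      ≥ (1 / 2) * A0 ^ 2 - (48 * d ^ 2 + 12 * d) * (x0 ^ 2 + hv ^ 2) := by
  have he2' : e2 ^ 2 ≤ d ^ 2 := sq_le_sq' (abs_le.1 he2).1 (abs_le.1 he2).2
  have hqx' : qx ^ 2 ≤ d ^ 2 := sq_le_sq' (abs_le.1 hqx).1 (abs_le.1 hqx).2
  obtain ⟨E, hE⟩ : ∃ E, E = 4 * x0 * e2 + 4 * qx * hv := ⟨_, rfl⟩
  obtain ⟨N, hN⟩ : ∃ N, N = 4 * x0 * hv := ⟨_, rfl⟩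
  have hLHS : (m + A0 + 4 * x0 * e2 + 4 * qx * hv) ^ 2 - m ^ 2
      - 2 * m * (A0 + 4 * x0 * q1v + 4 * qx * hv)
      = (A0 + E) ^ 2 + 2 * m * N := by
    rw [hE, hN, ← hq1v]; ring
  rw [hLHS]
  have h1 : (A0 + E) ^ 2 ≥ (1 / 2) * A0 ^ 2 - E ^ 2 := by nlinarith [sq_nonneg (A0 + 2 * E)]
  have h2 : E ^ 2 ≤ 32 * d ^ 2 * (x0 ^ 2 + hv ^ 2) := by
    rw [hE]
    nlinarith [sq_nonneg (x0 * e2 - qx * hv), sq_nonneg (x0 * e2 + qx * hv),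
      sq_nonneg x0, sq_nonneg hv, mul_le_mul_of_nonneg_left he2' (sq_nonneg x0),
      mul_le_mul_of_nonneg_left hqx' (sq_nonneg hv)]
  have h3 : 2 * m * N ≥ -(16 * d ^ 2 + 12 * d) * (x0 ^ 2 + hv ^ 2) := by
    have hmm : -(3 * d + 4 * d ^ 2) ≤ m ∧ m ≤ 3 * d + 4 * d ^ 2 := abs_le.1 hm
    rw [hN]
    nlinarith [sq_nonneg (x0 + hv), sq_nonneg (x0 - hv), hmm.1, hmm.2,
      mul_nonneg (mul_nonneg hd.le hd.le) (sq_nonneg (x0 + hv)),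
      mul_nonneg (mul_nonneg hd.le hd.le) (sq_nonneg (x0 - hv)),
      mul_nonneg hd.le (sq_nonneg (x0 + hv)), mul_nonneg hd.le (sq_nonneg (x0 - hv))]
  linarith


lemma pd_10 (f : ℝ × ℝ → ℝ) : pd f 1 0 = partialX f :=
  (pd_sX f 0 0).trans (congrArg partialX (pd_zz f))

lemma pd_20 (f : ℝ × ℝ → ℝ) : pd f 2 0 = partialX (partialX f) :=
  (pd_sX f 1 0).trans (congrArg partialX (pd_10 f))

lemma pd_01 (f : ℝ × ℝ → ℝ) : pd f 0 1 = partialT f :=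
  (pd_sT f 0).trans (congrArg partialT (pd_zz f))

lemma pd_11 (f : ℝ × ℝ → ℝ) : pd f 1 1 = partialX (partialT f) :=
  (pd_sX f 0 1).trans (congrArg partialX (pd_01 f))

lemma pack4 {f : ℝ × ℝ → ℝ} {U : Set (ℝ × ℝ)} (hUo : IsOpen U)
    (hf : ContDiffOn ℝ ((4 : ℕ) : WithTop ℕ∞) f U) :
    ContinuousOn f U ∧ ContinuousOn (partialX f) U ∧
      ContinuousOn (partialX (partialX f)) U ∧ ContinuousOn (partialT (partialX f)) U := by
  have h3 : ContDiffOn ℝ ((3 : ℕ) : WithTop ℕ∞) (partialX f) U := contDiffOn_partialX hUo hf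
  have h2 : ContDiffOn ℝ ((2 : ℕ) : WithTop ℕ∞) (partialX (partialX f)) U :=
    contDiffOn_partialX hUo h3
  have h2' : ContDiffOn ℝ ((2 : ℕ) : WithTop ℕ∞) (partialT (partialX f)) U :=
    contDiffOn_partialT hUo h3
  exact ⟨hf.continuousOn, h3.continuousOn, h2.continuousOn, h2'.continuousOn⟩

/-- Intermediate convexity bound (6.210) from the proof of Theorem 2. -/
theorem intermediate_convexity_bound (d : ℝ) (hd : 0 < d) :
    ∃ B : ℝ, 0 < B ∧
      ∀ a T α : ℝ, 0 < a → 0 < T → α ∈ Ioo (0 : ℝ) (1 / 2) →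
      ∀ lam : ℝ, 1 ≤ lam → ∀ γ : ℝ, 0 < γ →
      ∀ q₁ q₂ : ℝ × ℝ → ℝ, C4Near a T q₁ → C4Near a T q₂ →
        DerivBound2 a T d q₁ → DerivBound2 a T d q₂ →
        ∀ h : ℝ × ℝ → ℝ, (∀ p : ℝ × ℝ, h p = q₂ p - q₁ p) →
        Kfunc a T α lam γ q₂ - Kfunc a T α lam γ q₁ - Afunc a T α lam γ q₁ h
          ≥ (1 / 2) * (∫ p in Rect a T,
                (partialX (partialX h) p - 2 * partialT (partialX h) p) ^ 2
                  * carlemanWeight α lam p)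
            - B * (∫ p in Rect a T,
                ((partialX h (p.1, 0)) ^ 2 + (h p) ^ 2) * carlemanWeight α lam p)
            + γ * sobNormSq 4 (Rect a T) h := by
  refine ⟨48 * d ^ 2 + 12 * d, by positivity, ?_⟩
  intro a T α ha hT hα lam hlam γ hγ q₁ q₂ hC1 hC2 hB1 hB2 h hh
  have hDdef : h = fun p => q₂ p - q₁ p := funext hh
  obtain ⟨U₁, hU₁o, hKU₁, hq₁U⟩ := hC1
  obtain ⟨U₂, hU₂o, hKU₂, hq₂U⟩ := hC2
  have hUo : IsOpen (U₁ ∩ U₂) := hU₁o.inter hU₂o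
  set U : Set (ℝ × ℝ) := U₁ ∩ U₂ with hUdef
  set K : Set (ℝ × ℝ) := Icc (0 : ℝ) a ×ˢ Icc (0 : ℝ) T with hKdef
  have hKU : K ⊆ U := subset_inter hKU₁ hKU₂
  have hcast : ((4 : ℕ) : WithTop ℕ∞) = (4 : WithTop ℕ∞) := by norm_cast
  have hq₁ : ContDiffOn ℝ ((4 : ℕ) : WithTop ℕ∞) q₁ U := by
    rw [hcast]; exact hq₁U.mono inter_subset_left
  have hq₂ : ContDiffOn ℝ ((4 : ℕ) : WithTop ℕ∞) q₂ U := by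
    rw [hcast]; exact hq₂U.mono inter_subset_right
  have hQ : ContDiffOn ℝ ((4 : ℕ) : WithTop ℕ∞) h U := by
    rw [hDdef]; exact hq₂.sub hq₁
  have hRK : Rect a T ⊆ K := prod_mono Ioo_subset_Icc_self Ioo_subset_Icc_self
  have hRU : Rect a T ⊆ U := hRK.trans hKU
  have hmeas : MeasurableSet (Rect a T) := measurableSet_Ioo.prod measurableSet_Ioo
  have hKcomp : IsCompact K := isCompact_Icc.prod isCompact_Icc
  have hmaps0 : ∀ p ∈ K, ((p.1, (0 : ℝ)) : ℝ × ℝ) ∈ K := fun p hp => ⟨hp.1, le_refl 0, hT.le⟩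
  have hint : ∀ F : ℝ × ℝ → ℝ, ContinuousOn F K → IntegrableOn F (Rect a T) := fun F hF =>
    (hF.integrableOn_compact hKcomp).mono_set hRK
  obtain ⟨hc₁, hcX₁, hcXX₁, hcTX₁⟩ := pack4 hUo hq₁
  obtain ⟨hc₂, hcX₂, hcXX₂, hcTX₂⟩ := pack4 hUo hq₂
  obtain ⟨hcD, hcXD, hcXXD, hcTXD⟩ := pack4 hUo hQ
  have hψc : Continuous (carlemanWeight α lam) := by
    unfold carlemanWeight; fun_prop
  have hψ0 : ∀ p : ℝ × ℝ, 0 ≤ carlemanWeight α lam p := fun p => Real.exp_nonneg _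
  have htraceCont : ∀ g : ℝ × ℝ → ℝ, ContinuousOn g U →
      ContinuousOn (fun p : ℝ × ℝ => g (p.1, 0)) K := by
    intro g hg
    exact hg.comp ((continuous_fst.prodMk continuous_const).continuousOn)
      (fun p hp => hKU (hmaps0 p hp))
  have hMopCont : ∀ f : ℝ × ℝ → ℝ, ContinuousOn f U → ContinuousOn (partialX f) U →
      ContinuousOn (partialX (partialX f)) U → ContinuousOn (partialT (partialX f)) U →
      ContinuousOn (Mop f) K := by
    intro f h0 h1 h2 h3
    exact ((h2.mono hKU).sub (continuousOn_const.mul (h3.mono hKU))).add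
      ((continuousOn_const.mul (htraceCont _ h1)).mul (h0.mono hKU))
  have hMc₁ : ContinuousOn (Mop q₁) K := hMopCont q₁ hc₁ hcX₁ hcXX₁ hcTX₁
  have hMc₂ : ContinuousOn (Mop q₂) K := hMopCont q₂ hc₂ hcX₂ hcXX₂ hcTX₂
  -- integrability of the Carleman-weighted integrands
  have hF2int : IntegrableOn (fun p => Mop q₂ p ^ 2 * carlemanWeight α lam p) (Rect a T) :=
    hint _ ((hMc₂.pow 2).mul hψc.continuousOn)
  have hF1int : IntegrableOn (fun p => Mop q₁ p ^ 2 * carlemanWeight α lam p) (Rect a T) :=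
    hint _ ((hMc₁.pow 2).mul hψc.continuousOn)
  have hLtermCont : ContinuousOn (fun p : ℝ × ℝ =>
      partialX (partialX h) p - 2 * partialT (partialX h) p
        + 4 * partialX h (p.1, 0) * q₁ p + 4 * partialX q₁ (p.1, 0) * h p) K :=
    (((hcXXD.mono hKU).sub (continuousOn_const.mul (hcTXD.mono hKU))).add
      ((continuousOn_const.mul (htraceCont _ hcXD)).mul (hc₁.mono hKU))).add
      ((continuousOn_const.mul (htraceCont _ hcX₁)).mul (hcD.mono hKU))
  have hFLint : IntegrableOn (fun p => 2 * Mop q₁ p *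
      (partialX (partialX h) p - 2 * partialT (partialX h) p
        + 4 * partialX h (p.1, 0) * q₁ p + 4 * partialX q₁ (p.1, 0) * h p)
      * carlemanWeight α lam p) (Rect a T) :=
    hint _ ((((continuousOn_const.mul hMc₁).mul hLtermCont)).mul hψc.continuousOn)
  have hA0int : IntegrableOn (fun p =>
      (partialX (partialX h) p - 2 * partialT (partialX h) p) ^ 2
        * carlemanWeight α lam p) (Rect a T) :=
    hint _ ((((hcXXD.mono hKU).sub (continuousOn_const.mul (hcTXD.mono hKU))).pow 2).mul
      hψc.continuousOn)
  have hWint : IntegrableOn (fun p =>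
      ((partialX h (p.1, 0)) ^ 2 + (h p) ^ 2) * carlemanWeight α lam p) (Rect a T) :=
    hint _ ((((htraceCont _ hcXD).pow 2).add ((hcD.mono hKU).pow 2)).mul hψc.continuousOn)
  -- bounds coming from DerivBound2
  have hb₁0 : ∀ p ∈ K, |q₁ p| ≤ d := by
    intro p hp; have := hB1 0 0 (by norm_num) p hp; rwa [pd_zz] at this
  have hb₂0 : ∀ p ∈ K, |q₂ p| ≤ d := by
    intro p hp; have := hB2 0 0 (by norm_num) p hp; rwa [pd_zz] at this
  have hb₁X : ∀ p ∈ K, |partialX q₁ p| ≤ d := by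
    intro p hp; have := hB1 1 0 (by norm_num) p hp; rwa [pd_10] at this
  have hb₁XX : ∀ p ∈ K, |partialX (partialX q₁) p| ≤ d := by
    intro p hp; have := hB1 2 0 (by norm_num) p hp; rwa [pd_20] at this
  have hb₁TX : ∀ p ∈ Rect a T, |partialT (partialX q₁) p| ≤ d := by
    intro p hp
    have hcl : partialT (partialX q₁) p = partialX (partialT q₁) p :=
      clairaut hUo hq₁ (by norm_num) (hRU hp)
    rw [hcl, ← pd_11]
    exact hB1 1 1 (by norm_num) p (hRK hp)
  have hMb : ∀ p ∈ Rect a T, |Mop q₁ p| ≤ 3 * d + 4 * d ^ 2 := by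
    intro p hp
    have h1 := abs_le.1 (hb₁XX p (hRK hp))
    have h2 := abs_le.1 (hb₁TX p hp)
    have hce : |partialX q₁ (p.1, 0) * q₁ p| ≤ d ^ 2 := by
      rw [abs_mul, sq]
      exact mul_le_mul (hb₁X _ (hmaps0 p (hRK hp))) (hb₁0 p (hRK hp)) (abs_nonneg _) hd.le
    have h3 := abs_le.1 hce
    have hMeq : Mop q₁ p = partialX (partialX q₁) p - 2 * partialT (partialX q₁) p
        + 4 * (partialX q₁ (p.1, 0) * q₁ p) := by
      show partialX (partialX q₁) p - 2 * partialT (partialX q₁) p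
        + 4 * partialX q₁ (p.1, 0) * q₁ p = _
      ring
    rw [hMeq]
    exact abs_le.2 ⟨by linarith [h1.1, h1.2, h2.1, h2.2, h3.1, h3.2],
      by linarith [h1.1, h1.2, h2.1, h2.2, h3.1, h3.2]⟩
  -- continuity of pd derivatives up to order 4
  have hpdCont : ∀ f : ℝ × ℝ → ℝ, ContDiffOn ℝ ((4 : ℕ) : WithTop ℕ∞) f U →
      ∀ i j : ℕ, i + j ≤ 4 → ContinuousOn (pd f i j) K := by
    intro f hf i j hij
    exact (pd_contDiffOn hUo hf i j hij).continuousOn.mono hKU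
  -- pd of the difference
  have hpdD : ∀ i j : ℕ, i + j ≤ 4 → ∀ p ∈ Rect a T,
      pd h i j p = pd q₂ i j p - pd q₁ i j p := by
    intro i j hij p hp
    rw [hDdef]
    exact pd_sub hUo hq₂ hq₁ i j hij (hRU hp)
  -- Sobolev part identity
  have hSob : sobNormSq 4 (Rect a T) q₂ - sobNormSq 4 (Rect a T) q₁
      - 2 * sobInner 4 (Rect a T) q₁ h = sobNormSq 4 (Rect a T) h := by
    unfold sobNormSq sobInner
    rw [Finset.mul_sum, ← Finset.sum_sub_distrib, ← Finset.sum_sub_distrib]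
    refine Finset.sum_congr rfl ?_
    intro i hi
    rw [Finset.mul_sum, ← Finset.sum_sub_distrib, ← Finset.sum_sub_distrib]
    refine Finset.sum_congr rfl ?_
    intro j hj
    have hij : i + j ≤ 4 := by
      have h1 := Finset.mem_range.1 hi
      have h2 := Finset.mem_range.1 hj
      omega
    have hi2 : IntegrableOn (fun p => pd q₂ i j p ^ 2) (Rect a T) :=
      hint _ ((hpdCont q₂ hq₂ i j hij).pow 2)
    have hi1 : IntegrableOn (fun p => pd q₁ i j p ^ 2) (Rect a T) :=
      hint _ ((hpdCont q₁ hq₁ i j hij).pow 2)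
    have hcDij : ContinuousOn (pd h i j) K := by
      rw [hDdef]; exact hpdCont _ (by rw [← hDdef]; exact hQ) i j hij
    have hiP : IntegrableOn (fun p => 2 * (pd q₁ i j p * pd h i j p)) (Rect a T) :=
      hint _ (continuousOn_const.mul ((hpdCont q₁ hq₁ i j hij).mul hcDij))
    have hi21 : IntegrableOn (fun p => pd q₂ i j p ^ 2 - pd q₁ i j p ^ 2) (Rect a T) :=
      hint _ (((hpdCont q₂ hq₂ i j hij).pow 2).sub ((hpdCont q₁ hq₁ i j hij).pow 2))
    rw [← integral_const_mul, ← integral_sub hi2 hi1, ← integral_sub hi21 hiP]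
    refine setIntegral_congr_fun hmeas ?_
    intro p hp
    have hsub := hpdD i j hij p hp
    simp only
    rw [hsub]
    ring
  -- main inequality for the weighted part
  have hAmain : (∫ p in Rect a T, Mop q₂ p ^ 2 * carlemanWeight α lam p)
      - (∫ p in Rect a T, Mop q₁ p ^ 2 * carlemanWeight α lam p)
      - (∫ p in Rect a T, 2 * Mop q₁ p *
          (partialX (partialX h) p - 2 * partialT (partialX h) p
            + 4 * partialX h (p.1, 0) * q₁ p + 4 * partialX q₁ (p.1, 0) * h p)
          * carlemanWeight α lam p)
      ≥ (1 / 2) * (∫ p in Rect a T,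
            (partialX (partialX h) p - 2 * partialT (partialX h) p) ^ 2
              * carlemanWeight α lam p)
        - (48 * d ^ 2 + 12 * d) * (∫ p in Rect a T,
            ((partialX h (p.1, 0)) ^ 2 + (h p) ^ 2) * carlemanWeight α lam p) := by
    have hF21int : IntegrableOn (fun p => Mop q₂ p ^ 2 * carlemanWeight α lam p
        - Mop q₁ p ^ 2 * carlemanWeight α lam p) (Rect a T) :=
      hint _ (((hMc₂.pow 2).mul hψc.continuousOn).sub ((hMc₁.pow 2).mul hψc.continuousOn))
    have hFfull : IntegrableOn (fun p => (Mop q₂ p ^ 2 * carlemanWeight α lam p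
        - Mop q₁ p ^ 2 * carlemanWeight α lam p)
        - 2 * Mop q₁ p *
          (partialX (partialX h) p - 2 * partialT (partialX h) p
            + 4 * partialX h (p.1, 0) * q₁ p + 4 * partialX q₁ (p.1, 0) * h p)
          * carlemanWeight α lam p) (Rect a T) :=
      hint _ ((((hMc₂.pow 2).mul hψc.continuousOn).sub
        ((hMc₁.pow 2).mul hψc.continuousOn)).sub
        (((continuousOn_const.mul hMc₁).mul hLtermCont).mul hψc.continuousOn))
    have hRHSfull : IntegrableOn (fun p =>
        1 / 2 * ((partialX (partialX h) p - 2 * partialT (partialX h) p) ^ 2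
          * carlemanWeight α lam p)
        - (48 * d ^ 2 + 12 * d) * (((partialX h (p.1, 0)) ^ 2 + (h p) ^ 2)
          * carlemanWeight α lam p)) (Rect a T) :=
      hint _ ((continuousOn_const.mul ((((hcXXD.mono hKU).sub
        (continuousOn_const.mul (hcTXD.mono hKU))).pow 2).mul hψc.continuousOn)).sub
        (continuousOn_const.mul ((((htraceCont _ hcXD).pow 2).add
        ((hcD.mono hKU).pow 2)).mul hψc.continuousOn)))
    rw [← integral_sub hF2int hF1int, ← integral_sub hF21int hFLint,
      ← integral_const_mul, ← integral_const_mul,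
      ← integral_sub (hA0int.const_mul _) (hWint.const_mul _)]
    refine setIntegral_mono_on hRHSfull hFfull hmeas ?_
    intro p hp
    have hpU : p ∈ U := hRU hp
    have hpK : p ∈ K := hRK hp
    have htK : ((p.1, (0 : ℝ)) : ℝ × ℝ) ∈ K := hmaps0 p hpK
    have htU : ((p.1, (0 : ℝ)) : ℝ × ℝ) ∈ U := hKU htK
    have c4 : (1 : WithTop ℕ∞) ≤ ((4 : ℕ) : WithTop ℕ∞) := by norm_cast
    have c3 : (1 : WithTop ℕ∞) ≤ ((3 : ℕ) : WithTop ℕ∞) := by norm_cast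
    have hX3₁ : ContDiffOn ℝ ((3 : ℕ) : WithTop ℕ∞) (partialX q₁) U := contDiffOn_partialX hUo hq₁
    have hX3₂ : ContDiffOn ℝ ((3 : ℕ) : WithTop ℕ∞) (partialX q₂) U := contDiffOn_partialX hUo hq₂
    have e1 : ∀ r ∈ U, partialX h r = partialX q₂ r - partialX q₁ r := by
      intro r hr
      rw [hDdef]
      exact partialX_sub hUo hq₂ hq₁ c4 c4 hr
    have eXX : partialX (partialX h) p = partialX (partialX q₂) p - partialX (partialX q₁) p := by
      have hcg : partialX (partialX h) p
          = partialX (fun r => partialX q₂ r - partialX q₁ r) p :=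
        partialX_congr hUo (fun r hr => e1 r hr) hpU
      rw [hcg]
      exact partialX_sub hUo hX3₂ hX3₁ c3 c3 hpU
    have eTX : partialT (partialX h) p = partialT (partialX q₂) p - partialT (partialX q₁) p := by
      have hcg : partialT (partialX h) p
          = partialT (fun r => partialX q₂ r - partialX q₁ r) p :=
        partialT_congr hUo (fun r hr => e1 r hr) hpU
      rw [hcg]
      exact partialT_sub hUo hX3₂ hX3₁ c3 c3 hpU
    have ehv : h p = q₂ p - q₁ p := hh p
    have ex0 : partialX h (p.1, 0) = partialX q₂ (p.1, 0) - partialX q₁ (p.1, 0) := e1 _ htU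
    have hM2 : Mop q₂ p = Mop q₁ p
        + (partialX (partialX h) p - 2 * partialT (partialX h) p)
        + 4 * partialX h (p.1, 0) * q₂ p + 4 * partialX q₁ (p.1, 0) * h p := by
      have hMeq2 : Mop q₂ p = partialX (partialX q₂) p - 2 * partialT (partialX q₂) p
          + 4 * partialX q₂ (p.1, 0) * q₂ p := rfl
      have hMeq1 : Mop q₁ p = partialX (partialX q₁) p - 2 * partialT (partialX q₁) p
          + 4 * partialX q₁ (p.1, 0) * q₁ p := rfl
      rw [hMeq2, hMeq1, eXX, eTX, ex0, ehv]
      ring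
    have hkey := key_ineq d (Mop q₁ p)
      (partialX (partialX h) p - 2 * partialT (partialX h) p) (q₂ p)
      (partialX h (p.1, 0)) (h p) (partialX q₁ (p.1, 0)) (q₁ p) hd
      (hMb p hp) (hb₂0 p hpK) (hb₁X _ htK) (ehv ▸ rfl)
    have hmul := mul_le_mul_of_nonneg_right hkey (hψ0 p)
    calc 1 / 2 * ((partialX (partialX h) p - 2 * partialT (partialX h) p) ^ 2
            * carlemanWeight α lam p)
        - (48 * d ^ 2 + 12 * d) * (((partialX h (p.1, 0)) ^ 2 + (h p) ^ 2)
            * carlemanWeight α lam p)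
        = ((1 / 2) * (partialX (partialX h) p - 2 * partialT (partialX h) p) ^ 2
            - (48 * d ^ 2 + 12 * d) * ((partialX h (p.1, 0)) ^ 2 + (h p) ^ 2))
          * carlemanWeight α lam p := by ring
      _ ≤ ((Mop q₁ p + (partialX (partialX h) p - 2 * partialT (partialX h) p)
            + 4 * partialX h (p.1, 0) * q₂ p + 4 * partialX q₁ (p.1, 0) * h p) ^ 2
            - Mop q₁ p ^ 2
            - 2 * Mop q₁ p * ((partialX (partialX h) p - 2 * partialT (partialX h) p)
              + 4 * partialX h (p.1, 0) * q₁ p + 4 * partialX q₁ (p.1, 0) * h p))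
          * carlemanWeight α lam p := hmul
      _ = Mop q₂ p ^ 2 * carlemanWeight α lam p
          - Mop q₁ p ^ 2 * carlemanWeight α lam p
          - 2 * Mop q₁ p *
            (partialX (partialX h) p - 2 * partialT (partialX h) p
              + 4 * partialX h (p.1, 0) * q₁ p + 4 * partialX q₁ (p.1, 0) * h p)
            * carlemanWeight α lam p := by rw [hM2]; ring
  -- assemble
  have hγS : γ * sobNormSq 4 (Rect a T) q₂ - γ * sobNormSq 4 (Rect a T) q₁
      - 2 * γ * sobInner 4 (Rect a T) q₁ h = γ * sobNormSq 4 (Rect a T) h := by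
    linear_combination γ * hSob
  simp only [Kfunc, Afunc]
  linarith [hAmain, hγS]
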